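/- arXiv:1207.4572 — 2 statements merged into one kernel-verified Lean document; each statement's English description precedes it below -/
import Mathlib

section
/- The unique ℚ-bilinear bracket [-,-] on ℚH satisfying [[x],[y]] = ⟨x,y⟩·[x+y] for all x, y ∈ H is alternating (i.e., [X,X] = 0 for every X ∈ ℚH) and satisfies the Jacobi identity [[X,Y],Z] + [[Y,Z],X] + [[Z,X],Y] = 0 for all X, Y, Z ∈ ℚH; hence ℚH is a Lie algebra over ℚ. -/
/-- `H g` is the first homology group of a surface of genus `g`:
the free ℤ-module `ℤ^g × ℤ^g` of rank `2g`. -/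
abbrev H (g : ℕ) : Type := (Fin g → ℤ) × (Fin g → ℤ)
/-- The intersection form `⟨-,-⟩` on `H g`:
`⟨(a,b),(a',b')⟩ = ∑ i, (a i * b' i - a' i * b i)`. -/
def form {g : ℕ} (x y : H g) : ℤ := ∑ i, (x.1 i * y.2 i - y.1 i * x.2 i)
/-- The ℚ-vector space with basis `{[x] : x ∈ H}`. -/
abbrev QH (g : ℕ) : Type := AddMonoidAlgebra ℚ (H g)
/-- The basis element `[x]` of `QH g` corresponding to `x : H g`. -/
noncomputable def e {g : ℕ} (x : H g) : QH g := AddMonoidAlgebra.single x 1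

lemma form_add_left {g : ℕ} (x y z : H g) : form (x + y) z = form x z + form y z := by
  simp only [form, Prod.fst_add, Prod.snd_add, Pi.add_apply, ← Finset.sum_add_distrib]
  exact Finset.sum_congr rfl fun i _ => by ring

lemma form_anticomm {g : ℕ} (x y : H g) : form x y = - form y x := by
  simp only [form, ← Finset.sum_neg_distrib]
  exact Finset.sum_congr rfl fun i _ => by ring

noncomputable def Br0 (g : ℕ) : QH g →ₗ[ℚ] QH g →ₗ[ℚ] QH g :=
  (Finsupp.lsum ℚ fun x => LinearMap.toSpanSingleton ℚ _
    ((Finsupp.lsum ℚ fun y => LinearMap.toSpanSingleton ℚ (QH g) ((form x y : ℚ) • e (x + y)))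
      ∘ₗ (AddMonoidAlgebra.coeffLinearEquiv ℚ).toLinearMap))
    ∘ₗ (AddMonoidAlgebra.coeffLinearEquiv ℚ).toLinearMap

lemma Br0_apply (g : ℕ) (x y : H g) : Br0 g (e x) (e y) = (form x y : ℚ) • e (x + y) := by
  simp only [Br0, LinearMap.comp_apply, LinearEquiv.coe_coe,
    AddMonoidAlgebra.coeffLinearEquiv_apply, e, AddMonoidAlgebra.coeff_single]
  rw [Finsupp.lsum_single, LinearMap.toSpanSingleton_apply, one_smul]
  simp only [LinearMap.comp_apply, LinearEquiv.coe_coe,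
    AddMonoidAlgebra.coeffLinearEquiv_apply, AddMonoidAlgebra.coeff_single]
  rw [Finsupp.lsum_single, LinearMap.toSpanSingleton_apply, one_smul]

noncomputable def basisQH (g : ℕ) : Module.Basis (H g) ℚ (QH g) := AddMonoidAlgebra.basis (H g) ℚ

lemma basisQH_apply (g : ℕ) (x : H g) : basisQH g x = e x := rfl

/-- cyclic permutation of a trilinear map: (cyc t) X Y Z = t Y Z X -/
noncomputable def cyc {g : ℕ} (t : QH g →ₗ[ℚ] QH g →ₗ[ℚ] QH g →ₗ[ℚ] QH g) :
    QH g →ₗ[ℚ] QH g →ₗ[ℚ] QH g →ₗ[ℚ] QH g :=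
  (LinearMap.lflip.comp t).flip

lemma cyc_apply {g : ℕ} (t : QH g →ₗ[ℚ] QH g →ₗ[ℚ] QH g →ₗ[ℚ] QH g) (X Y Z : QH g) :
    cyc t X Y Z = t Y Z X := rfl

/-- There is a unique ℚ-bilinear bracket on `ℚH` with `⁅[x],[y]⁆ = ⟨x,y⟩·[x+y]` for all
`x, y ∈ H`; it is alternating and satisfies the Jacobi identity, so `ℚH` is a Lie algebra. -/
theorem goldman_bracket_unique_alternating_jacobi (g : ℕ) (hg : 1 ≤ g) :
    (∃! Br : QH g →ₗ[ℚ] QH g →ₗ[ℚ] QH g,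
        ∀ x y : H g, Br (e x) (e y) = (form x y : ℚ) • e (x + y)) ∧
    (∀ Br : QH g →ₗ[ℚ] QH g →ₗ[ℚ] QH g,
        (∀ x y : H g, Br (e x) (e y) = (form x y : ℚ) • e (x + y)) →
        (∀ X : QH g, Br X X = 0) ∧
        (∀ X Y Z : QH g, Br (Br X Y) Z + Br (Br Y Z) X + Br (Br Z X) Y = 0)) := by
  constructor
  · refine ⟨Br0 g, Br0_apply g, ?_⟩
    intro Br hBr
    refine (basisQH g).ext fun x => (basisQH g).ext fun y => ?_
    rw [basisQH_apply, basisQH_apply, hBr, Br0_apply]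
  · intro Br hBr
    -- antisymmetry : Br + Br.flip = 0
    have hanti : Br + Br.flip = 0 := by
      refine (basisQH g).ext fun x => (basisQH g).ext fun y => ?_
      simp only [basisQH_apply, LinearMap.add_apply, LinearMap.flip_apply,
        LinearMap.zero_apply, hBr]
      rw [add_comm y x, form_anticomm x y]
      push_cast
      module
    have hanti' : ∀ X Y : QH g, Br X Y + Br Y X = 0 := by
      intro X Y
      have h := LinearMap.congr_fun (LinearMap.congr_fun hanti X) Y
      simpa only [LinearMap.add_apply, LinearMap.flip_apply, LinearMap.zero_apply] using h
    constructor
    · intro X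
      have h2 : (2 : ℚ) • Br X X = 0 := by rw [two_smul]; exact hanti' X X
      have := smul_eq_zero.mp h2
      simpa using this
    · -- Jacobi: show the trilinear map J = T + cyc T + cyc (cyc T) is zero
      set T : QH g →ₗ[ℚ] QH g →ₗ[ℚ] QH g →ₗ[ℚ] QH g := Br.compr₂ Br with hT
      have hTapp : ∀ X Y Z : QH g, T X Y Z = Br (Br X Y) Z := fun _ _ _ => rfl
      have hJ : T + cyc T + cyc (cyc T) = 0 := by
        refine (basisQH g).ext fun x => (basisQH g).ext fun y => (basisQH g).ext fun z => ?_
        simp only [basisQH_apply, LinearMap.add_apply, LinearMap.zero_apply,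
          cyc_apply, hTapp]
        rw [hBr x y, map_smul, LinearMap.smul_apply, hBr (x+y) z,
            hBr y z, map_smul, LinearMap.smul_apply, hBr (y+z) x,
            hBr z x, map_smul, LinearMap.smul_apply, hBr (z+x) y]
        have e1 : y + z + x = x + y + z := by abel
        have e2 : z + x + y = x + y + z := by abel
        rw [e1, e2, smul_smul, smul_smul, smul_smul, ← add_smul, ← add_smul]
        have keyZ : form x y * form (x+y) z + form y z * form (y+z) x
            + form z x * form (z+x) y = 0 := by
          rw [form_add_left, form_add_left, form_add_left, form_anticomm y x,
            form_anticomm z x, form_anticomm z y]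
          ring
        have key : (form x y : ℚ) * (form (x+y) z) + (form y z) * (form (y+z) x)
            + (form z x) * (form (z+x) y) = 0 := by exact_mod_cast keyZ
        rw [key, zero_smul]
      intro X Y Z
      have h := LinearMap.congr_fun (LinearMap.congr_fun (LinearMap.congr_fun hJ X) Y) Z
      simpa only [LinearMap.add_apply, LinearMap.zero_apply, cyc_apply, hTapp] using h
end

section
/- Let n ≥ 1 and let S be a subset of ℤ^n (i.e., Fin n → ℤ) that generates ℤ^n as an additive monoid. Then the set S ∖ {0} of nonzero elements of S has at least n+1 elements. In particular, no ℤ-basis of ℤ^n generates ℤ^n as an additive monoid. -/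
open Module Submodule

/-- If `S ⊆ ℤ^n` generates `ℤ^n` as an additive monoid, then `S \ {0}` has at least
`n+1` elements; in particular, no ℤ-basis of `ℤ^n` generates it as an additive monoid. -/
theorem monoid_generators_of_int_lattice (n : ℕ) (hn : 1 ≤ n) :
    (∀ S : Set (Fin n → ℤ), AddSubmonoid.closure S = ⊤ →
      ((n + 1 : ℕ) : ℕ∞) ≤ (S \ {0}).encard) ∧
    (∀ b : Module.Basis (Fin n) ℤ (Fin n → ℤ),
      AddSubmonoid.closure (Set.range ⇑b) ≠ ⊤) := by
  classical
  have main : ∀ S : Set (Fin n → ℤ), AddSubmonoid.closure S = ⊤ →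
      ((n + 1 : ℕ) : ℕ∞) ≤ (S \ {0}).encard := by
    intro S hS
    by_contra hcon
    push_neg at hcon
    set T : Set (Fin n → ℤ) := S \ {0} with hT
    have hTfin : T.Finite := by
      rw [← Set.encard_lt_top_iff]
      exact lt_trans hcon (WithTop.coe_lt_top _)
    set F := hTfin.toFinset with hF
    have hFcoe : (↑F : Set (Fin n → ℤ)) = T := hTfin.coe_toFinset
    have hcard_le : F.card ≤ n := by
      rw [hTfin.encard_eq_coe_toFinset_card] at hcon
      exact_mod_cast Nat.lt_succ_iff.mp (by exact_mod_cast hcon)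
    -- the nonzero elements also generate
    have hclT : AddSubmonoid.closure T = ⊤ := by
      rw [eq_top_iff, ← hS, AddSubmonoid.closure_le]
      intro s hs
      rcases eq_or_ne s 0 with rfl | h
      · exact zero_mem _
      · exact AddSubmonoid.subset_closure ⟨hs, h⟩
    have hspan : ∀ x : Fin n → ℤ, x ∈ Submodule.span ℕ (↑F : Set (Fin n → ℤ)) := by
      intro x
      rw [← Submodule.mem_toAddSubmonoid, Submodule.span_nat_eq_addSubmonoidClosure,
        hFcoe, hclT]
      trivial
    -- the coercion map to ℚ^n
    let g : (Fin n → ℤ) →+ (Fin n → ℚ) :=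
      { toFun := fun x i => (x i : ℚ)
        map_zero' := by ext i; simp
        map_add' := by intro x y; ext i; simp }
    -- the images span ℚ^n over ℚ
    have hspanQ : ⊤ ≤ Submodule.span ℚ (Set.range fun t : ↥F => g ↑t) := by
      rw [← (Pi.basisFun ℚ (Fin n)).span_eq, Submodule.span_le]
      rintro _ ⟨i, rfl⟩
      obtain ⟨f, -, hf⟩ := mem_span_finset.mp (hspan (Pi.single i 1))
      have : Pi.basisFun ℚ (Fin n) i = ∑ t ∈ F, (f t : ℚ) • g t := by
        have h2 := congrArg g hf
        rw [map_sum] at h2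
        simp only [AddMonoidHom.map_nsmul] at h2
        simp only [Nat.cast_smul_eq_nsmul]
        rw [h2]
        ext j
        by_cases hji : j = i <;>
          simp [g, Pi.basisFun_apply, Pi.single_apply, hji]
      rw [this, ← Finset.sum_attach F (fun t => (f t : ℚ) • g t)]
      exact Submodule.sum_mem _ fun t _ =>
        Submodule.smul_mem _ _ (Submodule.subset_span ⟨t, rfl⟩)
    have hcard_ge : n ≤ F.card := by
      have := finrank_le_of_span_eq_top (top_le_iff.mp hspanQ)
      rwa [Module.finrank_fintype_fun_eq_card, Fintype.card_fin, Fintype.card_coe] at this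
    have hcard : F.card = n := le_antisymm hcard_le hcard_ge
    -- linear independence of the images
    have hli : LinearIndependent ℚ (fun t : ↥F => g ↑t) :=
      linearIndependent_of_top_le_span_of_card_eq_finrank hspanQ
        (by rw [Fintype.card_coe, hcard, Module.finrank_fintype_fun_eq_card, Fintype.card_fin])
    -- the relation : -(sum of all elements) is an ℕ-combination
    obtain ⟨f, -, hf⟩ := mem_span_finset.mp (hspan (-(∑ t ∈ F, t)))
    have hrel : ∑ t ∈ F, (f t + 1) • t = (0 : Fin n → ℤ) := by
      simp only [add_smul, one_smul, Finset.sum_add_distrib, hf]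
      exact neg_add_cancel _
    have hrelQ : ∑ t : ↥F, ((f ↑t + 1 : ℕ) : ℚ) • g ↑t = 0 := by
      have := congrArg g hrel
      rw [map_sum, map_zero] at this
      simp only [AddMonoidHom.map_nsmul] at this
      rw [← Finset.sum_attach F (fun t => (f t + 1) • g t)] at this
      simpa [← Nat.cast_smul_eq_nsmul ℚ] using this
    have hFne : F.Nonempty := Finset.card_pos.mp (by rw [hcard]; exact hn)
    obtain ⟨t0, ht0⟩ := hFne
    have := Fintype.linearIndependent_iff.mp hli
      (fun t : ↥F => ((f ↑t + 1 : ℕ) : ℚ)) hrelQ ⟨t0, ht0⟩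
    exact absurd (Nat.cast_eq_zero.mp this) (Nat.succ_ne_zero _)
  refine ⟨main, fun b hb => ?_⟩
  have h1 := main _ hb
  have h2 : (Set.range ⇑b \ {0}).encard ≤ (n : ℕ∞) := by
    calc (Set.range ⇑b \ {0}).encard ≤ (Set.range ⇑b).encard :=
          Set.encard_le_encard (Set.diff_subset)
      _ = (b '' Set.univ).encard := by rw [Set.image_univ]
      _ ≤ (Set.univ : Set (Fin n)).encard := Set.encard_image_le _ _
      _ = (n : ℕ∞) := by simp [Set.encard_univ]
  have := le_trans h1 h2
  have hn1 : (n : ℕ∞) < ((n + 1 : ℕ) : ℕ∞) := by exact_mod_cast Nat.lt_succ_self n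
  exact absurd this (not_le_of_gt hn1)
end
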